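/- Let χ, ψ be Dirichlet characters and u, v ∈ ℂ. Then for s ∈ ℂ with Re(s) > |Re(u)| + |Re(v)| + 2·max(Re(u),0,Re(v),Re(u+v)) + 1, the identity Σ_{n≥1} σ_{2u}(n,χ) σ_{2v}(n,ψ) n^{−(s+u+v)} = ζ(s+u+v) L(s−u+v,χ) L(s+u−v,ψ) L(s−u−v,χψ) / L(2s,χψ) holds. -/

import Mathlib

open Finset

/-- Twisted sum of divisors function. -/
noncomputable def sigmaChar {N : ℕ} (χ : DirichletCharacter ℂ N) (s : ℂ) (n : ℤ) : ℂ :=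
  ∑ d ∈ n.natAbs.divisors, χ (d : ZMod N) * (d : ℂ) ^ s

namespace RamanujanAux

noncomputable def Xg (x : ℂ) (k : ℕ) : ℂ := ∑ i ∈ range (k+1), x ^ i
noncomputable def Rg (x y : ℂ) (k : ℕ) : ℂ := ∑ j ∈ range (k+1), x ^ j * y ^ (k - j)
noncomputable def Pg (x y : ℂ) (k : ℕ) : ℂ := ∑ i ∈ range (k+1), Rg x y i * (x*y) ^ (k - i)
noncomputable def Tg (x y : ℂ) (k : ℕ) : ℂ := ∑ i ∈ range (k+1), Pg x y i
noncomputable def Eg (x y : ℂ) (m : ℕ) : ℂ := x^(m+1) * Xg y (m+1) + y^(m+1) * Xg x m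

variable (x y : ℂ)

lemma Xg_succ (k : ℕ) : Xg x (k+1) = Xg x k + x^(k+1) := sum_range_succ _ _

lemma Xg_succ' (k : ℕ) : Xg x (k+1) = 1 + x * Xg x k := by
  rw [Xg, sum_range_succ']
  simp only [pow_succ, pow_zero, Xg, mul_sum]
  rw [add_comm]
  congr 1
  exact sum_congr rfl fun i _ => by ring

lemma Rg_succ (k : ℕ) : Rg x y (k+1) = x^(k+1) + y * Rg x y k := by
  rw [Rg, sum_range_succ, Nat.sub_self, pow_zero, mul_one, Rg, mul_sum, add_comm]
  congr 1
  refine sum_congr rfl fun j hj => ?_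
  rw [mem_range] at hj
  rw [Nat.succ_sub (Nat.lt_succ_iff.mp hj), pow_succ]
  ring

lemma Pg_succ (k : ℕ) : Pg x y (k+1) = Rg x y (k+1) + (x*y) * Pg x y k := by
  rw [Pg, sum_range_succ, Nat.sub_self, pow_zero, mul_one, Pg, mul_sum, add_comm]
  congr 1
  refine sum_congr rfl fun j hj => ?_
  rw [mem_range] at hj
  rw [Nat.succ_sub (Nat.lt_succ_iff.mp hj), pow_succ]
  ring

lemma Tg_succ (k : ℕ) : Tg x y (k+1) = Tg x y k + Pg x y (k+1) := sum_range_succ _ _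

lemma geomR (k : ℕ) : (y - x) * Rg x y k = y^(k+1) - x^(k+1) := by
  induction k with
  | zero => simp [Rg]
  | succ k ih =>
      rw [Rg_succ]
      linear_combination y * ih

lemma edge_rec (k : ℕ) :
    Eg x y (k+2) = Rg x y (k+3) + x*y*Eg x y (k+1) - x*y*Rg x y (k+1) := by
  have e1 : Xg y (k+3) = 1 + y * Xg y (k+2) := Xg_succ' y (k+2)
  have e3 : Xg x (k+2) = 1 + x * Xg x (k+1) := Xg_succ' x (k+1)
  have e4 : Rg x y (k+3) = x^(k+3) + x^(k+2)*y + y^2 * Rg x y (k+1) := by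
    rw [Rg_succ x y (k+2), Rg_succ x y (k+1)]
    ring
  have e5 : (y - x) * Rg x y (k+1) = y^(k+2) - x^(k+2) := geomR x y (k+1)
  simp only [Eg]
  linear_combination x^(k+3) * e1 - e4 + y^(k+3) * e3 - y * e5

lemma S_rec (k : ℕ) : Xg x (k+1) * Xg y (k+1) = Xg x k * Xg y k + Eg x y k := by
  rw [Xg_succ, Xg_succ, Eg, Xg_succ]
  ring

lemma claimC : ∀ k, Pg x y (k+2) = x*y*Pg x y k + Eg x y (k+1) := by
  intro k
  induction k with
  | zero =>
      simp only [Pg, Rg, Eg, Xg]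
      simp [sum_range_succ]
      ring
  | succ k ih =>
      have p3 := Pg_succ x y (k+2)
      have p1 := Pg_succ x y k
      have hD := edge_rec x y k
      linear_combination p3 - x*y*p1 - hD + x*y*ih

lemma claimB : ∀ k, Xg x (k+2) * Xg y (k+2) = Tg x y (k+2) - x*y*Tg x y k := by
  intro k
  induction k with
  | zero =>
      show Xg x 2 * Xg y 2 = Tg x y 2 - x*y*Tg x y 0
      have c0 : Pg x y 2 = x*y*Pg x y 0 + Eg x y 1 := claimC x y 0
      have l2 : Xg x 2 * Xg y 2 = Xg x 1 * Xg y 1 + Eg x y 1 := S_rec x y 1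
      have t2 : Tg x y 2 = Tg x y 1 + Pg x y 2 := Tg_succ x y 1
      have base1 : Xg x 1 * Xg y 1 = Tg x y 1 := by
        simp only [Tg, Pg, Rg, Xg]
        simp [sum_range_succ]
        ring
      have t0 : Tg x y 0 = Pg x y 0 := by simp [Tg]
      linear_combination l2 + base1 - t2 - c0 + x*y*t0
  | succ k ih =>
      show Xg x (k+2+1) * Xg y (k+2+1) = Tg x y (k+2+1) - x*y*Tg x y (k+1)
      have l2 := S_rec x y (k+2)
      have t3 := Tg_succ x y (k+2)
      have t1 := Tg_succ x y k
      have cc : Pg x y (k+2+1) = x*y*Pg x y (k+1) + Eg x y (k+2) := claimC x y (k+1)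
      linear_combination l2 + ih - t3 + x*y*t1 - cc


open ArithmeticFunction Complex
open scoped ArithmeticFunction.zeta ArithmeticFunction.Moebius


variable {N : ℕ}

/-- The twisted power function `n ↦ χ(n) n^w` as an arithmetic function. -/
noncomputable def tw (χ : DirichletCharacter ℂ N) (w : ℂ) : ArithmeticFunction ℂ :=
  ⟨fun n => if n = 0 then 0 else χ (n : ZMod N) * (n : ℂ) ^ w, by simp⟩

lemma tw_apply (χ : DirichletCharacter ℂ N) (w : ℂ) {n : ℕ} (hn : n ≠ 0) :
    tw χ w n = χ (n : ZMod N) * (n : ℂ) ^ w := if_neg hn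

lemma cast_pow_cpow (p : ℕ) (w : ℂ) : ∀ i : ℕ, ((p ^ i : ℕ) : ℂ) ^ w = (((p : ℕ) : ℂ) ^ w) ^ i
  | 0 => by simp
  | (i+1) => by
      rw [pow_succ, pow_succ, Nat.cast_mul, natCast_mul_natCast_cpow, cast_pow_cpow p w i]

lemma tw_apply_prime_pow (χ : DirichletCharacter ℂ N) (w : ℂ) {p : ℕ} (hp : p.Prime)
    (i : ℕ) : tw χ w (p ^ i) = (χ (p : ZMod N) * (p : ℂ) ^ w) ^ i := by
  rw [tw_apply χ w (pow_ne_zero i hp.pos.ne'), cast_pow_cpow, mul_pow]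
  congr 1
  push_cast
  rw [map_pow]

lemma isMultiplicative_tw (χ : DirichletCharacter ℂ N) (w : ℂ) :
    (tw χ w).IsMultiplicative := by
  constructor
  · rw [tw_apply χ w one_ne_zero]
    simp
  · intro m n _
    rcases eq_or_ne m 0 with rfl | hm
    · simp [tw]
    rcases eq_or_ne n 0 with rfl | hn
    · simp [tw]
    rw [tw_apply χ w (mul_ne_zero hm hn), tw_apply χ w hm, tw_apply χ w hn]
    push_cast
    rw [map_mul, natCast_mul_natCast_cpow]
    ring

/-- `ζ` as a complex-valued arithmetic function. -/
noncomputable def zc : ArithmeticFunction ℂ := ((ζ : ArithmeticFunction ℕ) : ArithmeticFunction ℂ)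

lemma zc_apply {n : ℕ} (hn : n ≠ 0) : zc n = 1 := by
  simp [zc, natCoe_apply, zeta_apply, hn]

lemma isMultiplicative_zc : zc.IsMultiplicative := isMultiplicative_zeta.natCast

/-- Compression onto squares: `(sqAF f) (m^2) = f m`, zero off squares. -/
noncomputable def sqAF (f : ArithmeticFunction ℂ) : ArithmeticFunction ℂ :=
  ⟨fun n => if n.sqrt * n.sqrt = n then f n.sqrt else 0, by simp⟩

lemma sqAF_apply_sq (f : ArithmeticFunction ℂ) (m : ℕ) : sqAF f (m * m) = f m := by
  show (if (m*m).sqrt * (m*m).sqrt = m*m then f (m*m).sqrt else 0) = f m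
  rw [Nat.sqrt_eq m]
  simp

lemma sqAF_apply_not_sq (f : ArithmeticFunction ℂ) {n : ℕ} (h : ¬ IsSquare n) :
    sqAF f n = 0 := by
  show (if n.sqrt * n.sqrt = n then f n.sqrt else 0) = 0
  rw [if_neg]
  intro hc
  exact h ⟨n.sqrt, hc.symm⟩

lemma sqAF_eq_zero_of_ne (f : ArithmeticFunction ℂ) {n : ℕ} (h : n.sqrt * n.sqrt ≠ n) :
    sqAF f n = 0 := if_neg h

lemma isMultiplicative_sqAF {f : ArithmeticFunction ℂ} (hf : f.IsMultiplicative) :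
    (sqAF f).IsMultiplicative := by
  constructor
  · have := sqAF_apply_sq f 1
    simpa [hf.map_one] using this
  · intro m n hmn
    rcases eq_or_ne m 0 with rfl | hm
    · simp
    rcases eq_or_ne n 0 with rfl | hn
    · simp
    by_cases hsq : IsSquare (m * n)
    · obtain ⟨r, hr⟩ := hsq
      have hc : ∃ c, m = c ^ 2 := by
        refine exists_eq_pow_of_mul_eq_pow (b := n) (Nat.isUnit_iff.mpr ?_) (k := 2) (c := r) ?_
        · rw [gcd_eq_nat_gcd]; exact hmn
        · rw [hr, sq]
      have hd : ∃ d, n = d ^ 2 := by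
        refine exists_eq_pow_of_mul_eq_pow (b := m) (Nat.isUnit_iff.mpr ?_) (k := 2) (c := r) ?_
        · rw [gcd_eq_nat_gcd]; exact hmn.symm
        · rw [mul_comm] at hr; rw [hr, sq]
      obtain ⟨c, rfl⟩ := hc
      obtain ⟨d, rfl⟩ := hd
      have hcd : Nat.Coprime c d := by
        have h1 : Nat.Coprime (c ^ 2) d := Nat.Coprime.coprime_dvd_right (dvd_pow_self d two_ne_zero) hmn
        exact Nat.Coprime.coprime_dvd_left (dvd_pow_self c two_ne_zero) h1
      have : c ^ 2 * d ^ 2 = (c * d) * (c * d) := by ring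
      rw [this, sqAF_apply_sq, sq, sq, sqAF_apply_sq, sqAF_apply_sq]
      exact hf.map_mul_of_coprime hcd
    · -- m * n is not a square, so at least one of m, n is not a square
      have : ¬ IsSquare m ∨ ¬ IsSquare n := by
        by_contra hcon
        push_neg at hcon
        obtain ⟨⟨c, hc⟩, ⟨d, hd⟩⟩ := hcon
        exact hsq ⟨c * d, by rw [hc, hd]; ring⟩
      rcases this with h | h
      · rw [sqAF_apply_not_sq f h, sqAF_apply_not_sq f hsq, zero_mul]
      · rw [sqAF_apply_not_sq f h, sqAF_apply_not_sq f hsq, mul_zero]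

/-- moebius as complex arithmetic function -/
noncomputable def mc : ArithmeticFunction ℂ := ((μ : ArithmeticFunction ℤ) : ArithmeticFunction ℂ)

lemma isMultiplicative_mc : mc.IsMultiplicative := isMultiplicative_moebius.intCast

lemma mc_apply (n : ℕ) : mc n = ((μ n : ℤ) : ℂ) := intCoe_apply ..

/-- value of the square-compressed Möbius-twisted function at prime powers -/
lemma sq_mu_tw_prime_pow (χ : DirichletCharacter ℂ N) (w : ℂ) {p : ℕ} (hp : p.Prime) (j : ℕ) :
    sqAF (mc.pmul (tw χ w)) (p ^ j) =
      if j = 0 then 1 else if j = 2 then -(χ (p : ZMod N) * (p : ℂ) ^ w) else 0 := by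
  rcases Nat.even_or_odd j with ⟨t, ht⟩ | hodd
  · subst ht
    have hsq : p ^ (t + t) = (p ^ t) * (p ^ t) := by rw [← pow_add]
    rw [hsq, sqAF_apply_sq]
    rcases Nat.eq_zero_or_pos t with rfl | ht0
    · simp [isMultiplicative_mc.map_one, (isMultiplicative_tw χ w).map_one]
    rcases eq_or_ne t 1 with rfl | ht1
    · norm_num
      rw [mc_apply, ArithmeticFunction.moebius_apply_prime hp, tw_apply χ w hp.pos.ne']
      push_cast
      ring
    · have h2 : t + t ≠ 0 := by omega
      have h22 : t + t ≠ 2 := by omega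
      rw [if_neg h2, if_neg h22, pmul_apply, mc_apply,
        ArithmeticFunction.moebius_apply_prime_pow hp ht0.ne', if_neg ht1]
      simp
  · have h0 : j ≠ 0 := by rcases hodd with ⟨t, ht⟩; omega
    have h2 : j ≠ 2 := by rcases hodd with ⟨t, ht⟩; omega
    rw [if_neg h0, if_neg h2]
    apply sqAF_apply_not_sq
    rintro ⟨r, hr⟩
    have hrd : r ∣ p ^ j := by rw [hr]; exact dvd_mul_right r r
    obtain ⟨i, hi, rfl⟩ := (Nat.dvd_prime_pow hp).mp hrd
    rw [← pow_add] at hr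
    have := Nat.pow_right_injective hp.two_le hr
    rcases hodd with ⟨t, ht⟩
    omega

/-- Dirichlet convolution evaluated at prime powers. -/
lemma mul_apply_prime_pow (f g : ArithmeticFunction ℂ) {p : ℕ} (hp : p.Prime) (k : ℕ) :
    (f * g) (p ^ k) = ∑ i ∈ range (k+1), f (p ^ i) * g (p ^ (k - i)) := by
  rw [mul_apply, Nat.sum_divisorsAntidiagonal (f · * g ·),
    Nat.sum_divisors_prime_pow hp]
  refine sum_congr rfl fun i hi => ?_
  rw [mem_range, Nat.lt_succ_iff] at hi
  rw [Nat.pow_div hi hp.pos]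


lemma base1 (x y : ℂ) : Xg x 1 * Xg y 1 = Tg x y 1 := by
  simp only [Tg, Pg, Rg, Xg]
  simp [sum_range_succ]
  ring

lemma base0 (x y : ℂ) : Xg x 0 * Xg y 0 = Tg x y 0 := by
  simp [Tg, Pg, Rg, Xg]

lemma sum_if_two (T : ℕ → ℂ) (c : ℂ) (k : ℕ) :
    ∑ i ∈ range (k+3), T i * (if k+2-i = 0 then 1 else if k+2-i = 2 then c else 0)
      = T (k+2) + c * T k := by
  have e1 : k+2-(k+1) = 1 := by omega
  have e2 : k+2-(k+2) = 0 := by omega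
  have hsum : ∑ i ∈ range (k+1), T i * (if k+2-i = 0 then 1 else if k+2-i = 2 then c else 0)
      = T k * c := by
    refine Finset.sum_eq_single_of_mem k (self_mem_range_succ k) (fun i hi hne => ?_) |>.trans ?_
    · rw [mem_range, Nat.lt_succ_iff] at hi
      have h0 : k+2-i ≠ 0 := by omega
      have h2 : k+2-i ≠ 2 := by omega
      rw [if_neg h0, if_neg h2, mul_zero]
    · have h0 : k+2-k ≠ 0 := by omega
      have h2 : k+2-k = 2 := by omega
      rw [if_neg h0, h2, if_pos rfl]
  rw [show k+3 = (k+2)+1 from rfl, sum_range_succ, sum_range_succ, hsum, e1, e2]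
  norm_num
  ring

lemma master {N : ℕ} (χ ψ : DirichletCharacter ℂ N) (a b : ℂ) :
    (zc * tw χ a).pmul (zc * tw ψ b)
      = (zc * (tw χ a * tw ψ b * tw (χ * ψ) (a + b))) *
          sqAF (mc.pmul (tw (χ * ψ) (a + b))) := by
  have hmχ := isMultiplicative_tw χ a
  have hmψ := isMultiplicative_tw ψ b
  have hmχψ := isMultiplicative_tw (χ * ψ) (a + b)
  refine (ArithmeticFunction.IsMultiplicative.eq_iff_eq_on_prime_powers _
    ((isMultiplicative_zc.mul hmχ).pmul (isMultiplicative_zc.mul hmψ)) _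
    ((isMultiplicative_zc.mul ((hmχ.mul hmψ).mul hmχψ)).mul
      (isMultiplicative_sqAF (isMultiplicative_mc.pmul hmχψ)))).mpr ?_
  intro p k hp
  have hpc : ((p : ℕ) : ℂ) ≠ 0 := Nat.cast_ne_zero.mpr hp.pos.ne'
  set x := χ (p : ZMod N) * (p : ℂ) ^ a with hx
  set y := ψ (p : ZMod N) * (p : ℂ) ^ b with hy
  have hxy : (χ * ψ) (p : ZMod N) * (p : ℂ) ^ (a + b) = x * y := by
    rw [MulChar.mul_apply, cpow_add _ _ hpc, hx, hy]
    ring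
  -- left side
  have hXsum : ∀ z : ℂ, ∑ i ∈ range (k+1), z ^ (k - i) = Xg z k := by
    intro z
    rw [Xg, ← Finset.sum_range_reflect (fun i => z ^ i) (k+1)]
    exact sum_congr rfl fun i hi => by congr 1 <;> omega
  have hL : ((zc * tw χ a).pmul (zc * tw ψ b)) (p ^ k) = Xg x k * Xg y k := by
    rw [pmul_apply, mul_apply_prime_pow _ _ hp, mul_apply_prime_pow _ _ hp]
    rw [show (∑ i ∈ range (k+1), zc (p ^ i) * (tw χ a) (p ^ (k - i))) = Xg x k from ?_,
        show (∑ i ∈ range (k+1), zc (p ^ i) * (tw ψ b) (p ^ (k - i))) = Xg y k from ?_]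
    · rw [← hXsum y]
      exact sum_congr rfl fun i _ => by
        rw [zc_apply (pow_ne_zero _ hp.pos.ne'), tw_apply_prime_pow ψ b hp, one_mul]
    · rw [← hXsum x]
      exact sum_congr rfl fun i _ => by
        rw [zc_apply (pow_ne_zero _ hp.pos.ne'), tw_apply_prime_pow χ a hp, one_mul]
  -- right side pieces
  have hR : ∀ i, (tw χ a * tw ψ b) (p ^ i) = Rg x y i := by
    intro i
    rw [mul_apply_prime_pow _ _ hp, Rg]
    exact sum_congr rfl fun j _ => by
      rw [tw_apply_prime_pow χ a hp, tw_apply_prime_pow ψ b hp]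
  have hP : ∀ i, (tw χ a * tw ψ b * tw (χ * ψ) (a + b)) (p ^ i) = Pg x y i := by
    intro i
    rw [mul_apply_prime_pow _ _ hp, Pg]
    exact sum_congr rfl fun j _ => by
      rw [hR, tw_apply_prime_pow (χ * ψ) (a+b) hp, hxy]
  have hT : ∀ i, (zc * (tw χ a * tw ψ b * tw (χ * ψ) (a + b))) (p ^ i) = Tg x y i := by
    intro i
    rw [mul_apply_prime_pow _ _ hp]
    have : ∀ j ∈ range (i+1), zc (p ^ j) * (tw χ a * tw ψ b * tw (χ * ψ) (a + b)) (p ^ (i - j))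
        = Pg x y (i - j) := fun j _ => by
      rw [zc_apply (pow_ne_zero _ hp.pos.ne'), hP, one_mul]
    rw [sum_congr rfl this, Tg, ← Finset.sum_range_reflect (fun j => Pg x y j) (i+1)]
    exact sum_congr rfl fun j hj => by congr 1 <;> omega
  rw [hL, mul_apply_prime_pow _ _ hp]
  have hterm : ∀ i ∈ range (k+1),
      (zc * (tw χ a * tw ψ b * tw (χ * ψ) (a + b))) (p ^ i)
        * sqAF (mc.pmul (tw (χ * ψ) (a + b))) (p ^ (k - i))
      = Tg x y i * (if k - i = 0 then 1 else if k - i = 2 then -(x*y) else 0) := by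
    intro i _
    rw [hT, sq_mu_tw_prime_pow (χ * ψ) (a+b) hp, hxy]
  rw [sum_congr rfl hterm]
  match k with
  | 0 => simpa using (base0 x y)
  | 1 =>
      rw [show (1:ℕ)+1 = 2 from rfl, sum_range_succ, sum_range_succ]
      norm_num
      exact base1 x y
  | (k+2) =>
      rw [sum_if_two (Tg x y) (-(x*y)) k]
      have := claimB x y k
      linear_combination this

open scoped LSeries.notation

lemma term_tw {N : ℕ} (χ : DirichletCharacter ℂ N) (w s : ℂ) (n : ℕ) :
    LSeries.term ↗(tw χ w) s n = LSeries.term (χ ·) (s - w) n := by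
  rcases eq_or_ne n 0 with rfl | hn
  · simp
  rw [LSeries.term_of_ne_zero hn, LSeries.term_of_ne_zero hn, tw_apply χ w hn]
  have hm : (n : ℂ) ≠ 0 := Nat.cast_ne_zero.mpr hn
  have hws : (n : ℂ) ^ w ≠ 0 := fun h => hm ((cpow_eq_zero_iff _ _).mp h).1
  have hss : (n : ℂ) ^ s ≠ 0 := fun h => hm ((cpow_eq_zero_iff _ _).mp h).1
  rw [Complex.cpow_sub _ _ hm]
  field_simp

lemma LSeriesSummable_tw {N : ℕ} (χ : DirichletCharacter ℂ N) {w s : ℂ}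
    (h : 1 < (s - w).re) : LSeriesSummable ↗(tw χ w) s := by
  have := DirichletCharacter.LSeriesSummable_of_one_lt_re χ h
  exact (summable_congr (term_tw χ w s)).mpr this

lemma LSeries_tw {N : ℕ} [NeZero N] (χ : DirichletCharacter ℂ N) {w s : ℂ}
    (h : 1 < (s - w).re) :
    LSeries ↗(tw χ w) s = DirichletCharacter.LFunction χ (s - w) := by
  rw [DirichletCharacter.LFunction_eq_LSeries χ h]
  exact tsum_congr (term_tw χ w s)

lemma zc_eq : ↗zc = ↗(ζ : ArithmeticFunction ℕ) := by
  funext n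
  simp [zc, natCoe_apply]

lemma LSeriesSummable_zc {s : ℂ} (h : 1 < s.re) : LSeriesSummable ↗zc s := by
  rw [zc_eq]
  exact LSeriesSummable_zeta_iff.mpr h

lemma LSeries_zc {s : ℂ} (h : 1 < s.re) : LSeries ↗zc s = riemannZeta s := by
  rw [zc_eq]
  exact LSeries_zeta_eq_riemannZeta h

/-- the convolution of `μ·χ` with `χ` is `δ`. -/
lemma muchi_conv {N : ℕ} (χ : DirichletCharacter ℂ N) :
    (fun m : ℕ => ((μ m : ℤ) : ℂ) * χ (m : ZMod N)) ⍟ (χ ·) = LSeries.delta := by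
  funext n
  rcases eq_or_ne n 0 with rfl | hn
  · simp [LSeries.convolution_def, LSeries.delta]
  have key : ∀ p : ℕ × ℕ, p ∈ n.divisorsAntidiagonal →
      ((μ p.1 : ℤ) : ℂ) * χ (p.1 : ZMod N) * χ (p.2 : ZMod N)
        = χ (n : ZMod N) * (mc p.1 * zc p.2) := by
    intro p hp
    obtain ⟨hpn, -⟩ := Nat.mem_divisorsAntidiagonal.mp hp
    have h2 : p.2 ≠ 0 := Nat.right_ne_zero_of_mem_divisorsAntidiagonal hp
    rw [zc_apply h2, mc_apply, ← hpn]
    push_cast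
    rw [map_mul]
    ring
  simp only [LSeries.convolution_def]
  rw [Finset.sum_congr rfl key, ← Finset.mul_sum]
  have : ∑ p ∈ n.divisorsAntidiagonal, mc p.1 * zc p.2 = (mc * zc) n := (mul_apply).symm
  rw [this]
  have hmz : mc * zc = 1 := ArithmeticFunction.coe_moebius_mul_coe_zeta
  rw [hmz, ArithmeticFunction.one_apply]
  rcases eq_or_ne n 1 with rfl | hn1
  · simp [LSeries.delta]
  · simp [LSeries.delta, hn1]

lemma norm_mu_le (n : ℕ) : ‖((μ n : ℤ) : ℂ)‖ ≤ 1 := by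
  by_cases h : Squarefree n
  · rw [ArithmeticFunction.moebius_apply_of_squarefree h]
    push_cast
    rw [norm_pow, norm_neg, norm_one, one_pow]
  · rw [ArithmeticFunction.moebius_eq_zero_of_not_squarefree h]
    simp

lemma LSeriesSummable_muchi {N : ℕ} (χ : DirichletCharacter ℂ N) {z : ℂ} (h : 1 < z.re) :
    LSeriesSummable (fun m : ℕ => ((μ m : ℤ) : ℂ) * χ (m : ZMod N)) z := by
  have hχ : LSeriesSummable (χ ·) z := DirichletCharacter.LSeriesSummable_of_one_lt_re χ h
  have hnorm : Summable fun n => ‖LSeries.term (χ ·) z n‖ := summable_norm_iff.mpr hχ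
  refine Summable.of_norm_bounded hnorm fun n => ?_
  refine LSeries.norm_term_le z ?_
  rw [norm_mul]
  calc ‖((μ n : ℤ) : ℂ)‖ * ‖χ (n : ZMod N)‖ ≤ 1 * ‖χ (n : ZMod N)‖ := by
        gcongr; exact norm_mu_le n
    _ = ‖χ (n : ZMod N)‖ := one_mul _

section sqseries

variable {N : ℕ} (χ : DirichletCharacter ℂ N) (w s : ℂ)

lemma term_sq_comp (m : ℕ) :
    LSeries.term ↗(sqAF (mc.pmul (tw χ w))) s (m * m)
      = LSeries.term (fun m : ℕ => ((μ m : ℤ) : ℂ) * χ (m : ZMod N)) (2 * s - w) m := by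
  rcases eq_or_ne m 0 with rfl | hm
  · simp
  have hmm : m * m ≠ 0 := mul_ne_zero hm hm
  rw [LSeries.term_of_ne_zero hmm, LSeries.term_of_ne_zero hm]
  have hmc : (m : ℂ) ≠ 0 := Nat.cast_ne_zero.mpr hm
  have hw : (m : ℂ) ^ w ≠ 0 := fun h => hmc ((cpow_eq_zero_iff _ _).mp h).1
  have hs : (m : ℂ) ^ s ≠ 0 := fun h => hmc ((cpow_eq_zero_iff _ _).mp h).1
  have h1 : ((m * m : ℕ) : ℂ) ^ s = (m : ℂ) ^ s * (m : ℂ) ^ s := by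
    push_cast
    exact natCast_mul_natCast_cpow m m s
  have h2 : (m : ℂ) ^ (2 * s - w) = ((m : ℂ) ^ s * (m : ℂ) ^ s) / (m : ℂ) ^ w := by
    rw [Complex.cpow_sub _ _ hmc, two_mul, Complex.cpow_add _ _ hmc]
  have h3 : (sqAF (mc.pmul (tw χ w))) (m * m) = ((μ m : ℤ) : ℂ) * χ (m : ZMod N) * (m : ℂ) ^ w := by
    rw [sqAF_apply_sq, pmul_apply, mc_apply, tw_apply χ w hm]
    ring
  rw [h1, h2, h3]
  field_simp

lemma term_sq_vanish {n : ℕ} (hn : n ∉ Set.range (fun m : ℕ => m * m)) :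
    LSeries.term ↗(sqAF (mc.pmul (tw χ w))) s n = 0 := by
  rcases eq_or_ne n 0 with rfl | h0
  · simp
  rw [LSeries.term_of_ne_zero h0]
  have : (sqAF (mc.pmul (tw χ w))) n = 0 := by
    apply sqAF_eq_zero_of_ne
    intro hc
    exact hn ⟨n.sqrt, hc⟩
  rw [this, zero_div]

lemma sq_inj : Function.Injective (fun m : ℕ => m * m) :=
  fun _ _ h => Nat.mul_self_inj.mp h

lemma LSeriesSummable_sq (hz : 1 < (2 * s - w).re) :
    LSeriesSummable ↗(sqAF (mc.pmul (tw χ w))) s := by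
  have hG := LSeriesSummable_muchi χ (z := 2 * s - w) hz
  have hcomp : Summable ((LSeries.term ↗(sqAF (mc.pmul (tw χ w))) s) ∘ (fun m : ℕ => m * m)) := by
    refine (summable_congr fun m => ?_).mpr hG
    exact term_sq_comp χ w s m
  exact (Function.Injective.summable_iff sq_inj (fun x hx => term_sq_vanish χ w s hx)).mp hcomp

lemma LSeries_sq (hz : 1 < (2 * s - w).re) :
    LSeries ↗(sqAF (mc.pmul (tw χ w))) s
      = LSeries (fun m : ℕ => ((μ m : ℤ) : ℂ) * χ (m : ZMod N)) (2 * s - w) := by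
  rw [LSeries, LSeries]
  rw [← Function.Injective.tsum_eq sq_inj (f := LSeries.term ↗(sqAF (mc.pmul (tw χ w))) s)
    (fun x hx => by by_contra hc; exact Function.mem_support.mp hx (term_sq_vanish χ w s hc))]
  exact tsum_congr fun m => term_sq_comp χ w s m

lemma LSeries_sq_mul [NeZero N] (hz : 1 < (2 * s - w).re) :
    LSeries ↗(sqAF (mc.pmul (tw χ w))) s * DirichletCharacter.LFunction χ (2 * s - w) = 1 := by
  rw [LSeries_sq χ w s hz, DirichletCharacter.LFunction_eq_LSeries χ hz,
    ← LSeries_convolution' (LSeriesSummable_muchi χ hz)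
      (DirichletCharacter.LSeriesSummable_of_one_lt_re χ hz),
    muchi_conv χ, LSeries_delta, Pi.one_apply]

end sqseries

lemma sigmaChar_eq_conv {N : ℕ} (χ : DirichletCharacter ℂ N) (w : ℂ) {n : ℕ} (hn : n ≠ 0) :
    (zc * tw χ w) n = sigmaChar χ w (n : ℤ) := by
  rw [sigmaChar, Int.natAbs_natCast, mul_apply,
    Nat.sum_divisorsAntidiagonal' (f := fun d e => zc d * tw χ w e)]
  refine Finset.sum_congr rfl fun d hd => ?_
  rw [Nat.mem_divisors] at hd
  have hd0 : d ≠ 0 := by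
    rintro rfl
    exact hn (Nat.eq_zero_of_zero_dvd hd.1)
  have hnd0 : n / d ≠ 0 := Nat.div_ne_zero_iff.mpr ⟨hd0, Nat.le_of_dvd (Nat.pos_of_ne_zero hn) hd.1⟩
  rw [zc_apply hnd0, tw_apply χ w hd0, one_mul]

end RamanujanAux

open RamanujanAux ArithmeticFunction Complex
open scoped LSeries.notation

/-- Specialization of the character-twisted Ramanujan identity used for the Mellin
transform of the constant term `C_{i∞}(y)`. -/
theorem ramanujan_identity_specialized {N : ℕ} [NeZero N] (χ ψ : DirichletCharacter ℂ N)
    (u v s : ℂ)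
    (hs : |u.re| + |v.re| + 2 * max (max u.re 0) (max v.re (u + v).re) + 1 < s.re) :
    ∑' n : ℕ, sigmaChar χ (2 * u) ((n : ℤ) + 1) * sigmaChar ψ (2 * v) ((n : ℤ) + 1)
        / ((n : ℂ) + 1) ^ (s + u + v)
      = riemannZeta (s + u + v) * DirichletCharacter.LFunction χ (s - u + v)
          * DirichletCharacter.LFunction ψ (s + u - v)
          * DirichletCharacter.LFunction (χ * ψ) (s - u - v)
          / DirichletCharacter.LFunction (χ * ψ) (2 * s) := by
  have hM0 : (0:ℝ) ≤ max (max u.re 0) (max v.re (u+v).re) :=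
    le_trans (le_max_right u.re 0) (le_max_left _ _)
  have hu1 := le_abs_self u.re
  have hu2 := neg_abs_le u.re
  have hv1 := le_abs_self v.re
  have hv2 := neg_abs_le v.re
  have h1 : 1 < (s + u + v).re := by
    simp only [Complex.add_re]
    linarith
  have h2 : 1 < ((s + u + v) - 2*u).re := by
    simp only [Complex.add_re, Complex.sub_re, Complex.mul_re, Complex.re_ofNat,
      Complex.im_ofNat, zero_mul, sub_zero]
    linarith
  have h3 : 1 < ((s + u + v) - 2*v).re := by
    simp only [Complex.add_re, Complex.sub_re, Complex.mul_re, Complex.re_ofNat,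
      Complex.im_ofNat, zero_mul, sub_zero]
    linarith
  have h4 : 1 < ((s + u + v) - (2*u + 2*v)).re := by
    simp only [Complex.add_re, Complex.sub_re, Complex.mul_re, Complex.re_ofNat,
      Complex.im_ofNat, zero_mul, sub_zero]
    linarith
  have h5 : 1 < (2*(s + u + v) - (2*u + 2*v)).re := by
    simp only [Complex.add_re, Complex.sub_re, Complex.mul_re, Complex.re_ofNat,
      Complex.im_ofNat, zero_mul, sub_zero]
    linarith
  have hzc := LSeriesSummable_zc h1
  have htwχ : LSeriesSummable ↗(tw χ (2*u)) (s+u+v) := LSeriesSummable_tw χ h2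
  have htwψ : LSeriesSummable ↗(tw ψ (2*v)) (s+u+v) := LSeriesSummable_tw ψ h3
  have htwχψ : LSeriesSummable ↗(tw (χ*ψ) (2*u+2*v)) (s+u+v) := LSeriesSummable_tw (χ*ψ) h4
  have hsq : LSeriesSummable ↗(sqAF (mc.pmul (tw (χ*ψ) (2*u+2*v)))) (s+u+v) :=
    LSeriesSummable_sq (χ*ψ) (2*u+2*v) (s+u+v) h5
  have hs1 := ArithmeticFunction.LSeriesSummable_mul htwχ htwψ
  have hs2 := ArithmeticFunction.LSeriesSummable_mul hs1 htwχψ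
  have hs3 := ArithmeticFunction.LSeriesSummable_mul hzc hs2
  -- identify the LHS with an L-series
  have key : (∑' n : ℕ, sigmaChar χ (2 * u) ((n : ℤ) + 1) * sigmaChar ψ (2 * v) ((n : ℤ) + 1)
        / ((n : ℂ) + 1) ^ (s + u + v))
      = LSeries ↗((zc * tw χ (2*u)).pmul (zc * tw ψ (2*v))) (s+u+v) := by
    have hsupp : Function.support
        (LSeries.term ↗((zc * tw χ (2*u)).pmul (zc * tw ψ (2*v))) (s+u+v)) ⊆
          Set.range Nat.succ := by
      intro x hx
      have hx0 : x ≠ 0 := by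
        rintro rfl
        exact Function.mem_support.mp hx (LSeries.term_zero _ _)
      obtain ⟨k, rfl⟩ := Nat.exists_eq_succ_of_ne_zero hx0
      exact ⟨k, rfl⟩
    rw [LSeries, ← Function.Injective.tsum_eq (g := Nat.succ) Nat.succ_injective hsupp]
    refine tsum_congr fun n => ?_
    rw [LSeries.term_of_ne_zero (Nat.succ_ne_zero n)]
    have e1 : ((n : ℤ) + 1) = ((n.succ : ℕ) : ℤ) := by push_cast; ring
    have e2 : ((n : ℂ) + 1) = ((n.succ : ℕ) : ℂ) := by push_cast; ring
    rw [e1, e2, ← sigmaChar_eq_conv χ (2*u) (Nat.succ_ne_zero n),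
      ← sigmaChar_eq_conv ψ (2*v) (Nat.succ_ne_zero n), pmul_apply]
  rw [key, master χ ψ (2*u) (2*v)]
  rw [ArithmeticFunction.LSeries_mul' hs3 hsq, ArithmeticFunction.LSeries_mul' hzc hs2,
    ArithmeticFunction.LSeries_mul' hs1 htwχψ, ArithmeticFunction.LSeries_mul' htwχ htwψ]
  rw [LSeries_zc h1, LSeries_tw χ h2, LSeries_tw ψ h3, LSeries_tw (χ*ψ) h4]
  have hq := LSeries_sq_mul (χ*ψ) (2*u+2*v) (s+u+v) h5
  rw [show 2*(s+u+v) - (2*u+2*v) = 2*s by ring] at hq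
  rw [show (s+u+v) - 2*u = s - u + v by ring, show (s+u+v) - 2*v = s + u - v by ring,
    show (s+u+v) - (2*u+2*v) = s - u - v by ring]
  have hL4 : DirichletCharacter.LFunction (χ*ψ) (2*s) ≠ 0 := by
    intro h
    rw [h, mul_zero] at hq
    exact one_ne_zero hq.symm
  rw [eq_div_iff hL4]
  linear_combination (riemannZeta (s+u+v) * DirichletCharacter.LFunction χ (s-u+v)
    * DirichletCharacter.LFunction ψ (s+u-v) * DirichletCharacter.LFunction (χ*ψ) (s-u-v)) * hq
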